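/- For δ_1 > δ_2 > 0, ∫_{-∞}^{∞} |erf(z/δ_1) - erf(z/δ2)| dz = (2/√π)(δ_1 - δ_2). -/

import Mathlib

open MeasureTheory Real

noncomputable def erf (ζ : ℝ) : ℝ := (2 / Real.sqrt Real.pi) * ∫ χ in (0:ℝ)..ζ, Real.exp (-χ^2)

lemma contExpSq : Continuous fun χ : ℝ => Real.exp (-χ^2) := by
  fun_prop

lemma erf_hasDerivAt (x : ℝ) :
    HasDerivAt erf (2 / Real.sqrt Real.pi * Real.exp (-x^2)) x := by
  have h : HasDerivAt (fun ζ : ℝ => ∫ χ in (0:ℝ)..ζ, Real.exp (-χ^2)) (Real.exp (-x^2)) x :=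
    intervalIntegral.integral_hasDerivAt_right (contExpSq.intervalIntegrable _ _)
      (contExpSq.stronglyMeasurableAtFilter _ _) contExpSq.continuousAt
  exact h.const_mul (2 / Real.sqrt Real.pi)

lemma erf_sub (a b : ℝ) :
    erf b - erf a = (2 / Real.sqrt Real.pi) * ∫ χ in a..b, Real.exp (-χ^2) := by
  unfold erf
  rw [← mul_sub,
    intervalIntegral.integral_interval_sub_left (contExpSq.intervalIntegrable _ _)
      (contExpSq.intervalIntegrable _ _)]

lemma erf_mono : Monotone erf := by
  intro a b hab
  have h := erf_sub a b
  have h2 : 0 ≤ ∫ χ in a..b, Real.exp (-χ^2) :=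
    intervalIntegral.integral_nonneg hab fun x _ => (Real.exp_pos _).le
  have hc : 0 ≤ 2 / Real.sqrt Real.pi := by positivity
  nlinarith [mul_nonneg hc h2]

lemma erf_neg (x : ℝ) : erf (-x) = - erf x := by
  unfold erf
  have h := intervalIntegral.integral_comp_neg (a := (0:ℝ)) (b := x)
    (f := fun χ => Real.exp (-χ^2))
  simp only [neg_neg, neg_zero, neg_sq] at h
  rw [intervalIntegral.integral_symm (-x) 0, ← h]
  ring

theorem stmt5 (δ1 δ2 : ℝ) (hδ2 : 0 < δ2) (hδ : δ2 < δ1) :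
    ∫ z : ℝ, |erf (z/δ1) - erf (z/δ2)| = (2 / Real.sqrt Real.pi) * (δ1 - δ2) := by
  have hδ1 : 0 < δ1 := hδ2.trans hδ
  have hs : 0 < Real.sqrt Real.pi := Real.sqrt_pos.mpr Real.pi_pos
  set c : ℝ := 2 / Real.sqrt Real.pi with hcdef
  have hc0 : 0 < c := by positivity
  -- the even function
  set f : ℝ → ℝ := fun z => |erf (z/δ1) - erf (z/δ2)| with hfdef
  have habs : ∀ z : ℝ, |erf (z/δ1) - erf (z/δ2)| = f |z| := by
    intro z
    rcases abs_cases z with ⟨h, _⟩ | ⟨h, _⟩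
    · rw [h]
    · rw [h]
      simp only [hfdef, neg_div, erf_neg]
      rw [show -erf (z/δ1) - -erf (z/δ2) = -(erf (z/δ1) - erf (z/δ2)) by ring, abs_neg]
  -- the antiderivative
  set g : ℝ → ℝ := fun z => z * (erf (z/δ2) - erf (z/δ1))
      + δ2 / Real.sqrt Real.pi * Real.exp (-(z/δ2)^2)
      - δ1 / Real.sqrt Real.pi * Real.exp (-(z/δ1)^2) with hgdef
  have hderiv : ∀ x : ℝ, HasDerivAt g (erf (x/δ2) - erf (x/δ1)) x := by
    intro x
    have hdiv : ∀ δ : ℝ, HasDerivAt (fun z : ℝ => z / δ) (1/δ) x := by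
      intro δ
      simpa using (hasDerivAt_id x).div_const δ
    have herf : ∀ δ : ℝ, HasDerivAt (fun z : ℝ => erf (z/δ))
        (c * Real.exp (-(x/δ)^2) * (1/δ)) x := by
      intro δ
      exact HasDerivAt.comp (h₂ := erf) (h := fun z : ℝ => z / δ) x (erf_hasDerivAt (x/δ)) (hdiv δ)
    have hexp : ∀ δ : ℝ, HasDerivAt (fun z : ℝ => Real.exp (-(z/δ)^2))
        (Real.exp (-(x/δ)^2) * (-(2 * (x/δ)^1 * (1/δ)))) x := by
      intro δ
      exact (((hdiv δ).pow 2).neg).exp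
    have h1 : HasDerivAt g
        (1 * (erf (x/δ2) - erf (x/δ1))
          + x * (c * Real.exp (-(x/δ2)^2) * (1/δ2) - c * Real.exp (-(x/δ1)^2) * (1/δ1))
          + δ2 / Real.sqrt Real.pi * (Real.exp (-(x/δ2)^2) * (-(2 * (x/δ2)^1 * (1/δ2))))
          - δ1 / Real.sqrt Real.pi * (Real.exp (-(x/δ1)^2) * (-(2 * (x/δ1)^1 * (1/δ1))))) x := by
      exact (((hasDerivAt_id x).mul ((herf δ2).sub (herf δ1))).add
        ((hexp δ2).const_mul (δ2 / Real.sqrt Real.pi))).sub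
        ((hexp δ1).const_mul (δ1 / Real.sqrt Real.pi))
    convert h1 using 1
    rw [hcdef]
    field_simp
    ring
  have hpos : ∀ x ∈ Set.Ioi (0:ℝ), 0 ≤ erf (x/δ2) - erf (x/δ1) := by
    intro x hx
    have : x/δ1 ≤ x/δ2 := by
      apply div_le_div_of_nonneg_left (le_of_lt hx) hδ2 hδ.le
    linarith [erf_mono this]
  -- tendsto parts
  have hexp_tendsto : ∀ δ : ℝ, 0 < δ →
      Filter.Tendsto (fun z : ℝ => Real.exp (-(z/δ)^2)) Filter.atTop (nhds 0) := by
    intro δ hδ'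
    apply Real.tendsto_exp_atBot.comp
    apply Filter.tendsto_neg_atBot_iff.mpr
    exact (Filter.tendsto_pow_atTop two_ne_zero).comp (Filter.tendsto_id.atTop_div_const hδ')
  have hsq_tendsto : Filter.Tendsto (fun z : ℝ => z^2 * Real.exp (-(z/δ1)^2))
      Filter.atTop (nhds 0) := by
    have h1 : Filter.Tendsto (fun z : ℝ => (z/δ1)^2) Filter.atTop Filter.atTop :=
      (Filter.tendsto_pow_atTop two_ne_zero).comp (Filter.tendsto_id.atTop_div_const hδ1)
    have h2 : Filter.Tendsto (fun y : ℝ => y^1 * Real.exp (-y)) Filter.atTop (nhds 0) :=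
      tendsto_pow_mul_exp_neg_atTop_nhds_zero 1
    have h3 := (h2.comp h1).const_mul (δ1^2)
    rw [mul_zero] at h3
    convert h3 using 2 with z
    simp only [Function.comp_apply, pow_one]
    field_simp
  have hmul_tendsto : Filter.Tendsto (fun z : ℝ => z * (erf (z/δ2) - erf (z/δ1)))
      Filter.atTop (nhds 0) := by
    apply squeeze_zero' (g := fun z => c * (1/δ2 - 1/δ1) * (z^2 * Real.exp (-(z/δ1)^2)))
    · filter_upwards [Filter.eventually_ge_atTop (0:ℝ)] with z hz
      rcases eq_or_lt_of_le hz with h0 | h0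
      · simp [← h0]
      · exact mul_nonneg hz (hpos z h0)
    · filter_upwards [Filter.eventually_ge_atTop (0:ℝ)] with z hz
      have hle : z/δ1 ≤ z/δ2 := div_le_div_of_nonneg_left hz hδ2 hδ.le
      have hI : (∫ χ in (z/δ1)..(z/δ2), Real.exp (-χ^2))
          ≤ Real.exp (-(z/δ1)^2) * (z/δ2 - z/δ1) := by
        have := intervalIntegral.integral_mono_on (μ := volume) hle (contExpSq.intervalIntegrable _ _)
          (intervalIntegrable_const (c := Real.exp (-(z/δ1)^2)))
          (fun x hx => by
            have hx1 : z/δ1 ≤ x := hx.1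
            have h0 : 0 ≤ z/δ1 := div_nonneg hz hδ1.le
            have : (z/δ1)^2 ≤ x^2 := by nlinarith
            exact Real.exp_le_exp.mpr (by linarith))
        simpa [mul_comm] using this
      have hdiff := erf_sub (z/δ1) (z/δ2)
      have hb : erf (z/δ2) - erf (z/δ1) ≤ c * (Real.exp (-(z/δ1)^2) * (z/δ2 - z/δ1)) := by
        rw [hdiff]
        exact mul_le_mul_of_nonneg_left hI hc0.le
      calc z * (erf (z/δ2) - erf (z/δ1))
          ≤ z * (c * (Real.exp (-(z/δ1)^2) * (z/δ2 - z/δ1))) :=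
            mul_le_mul_of_nonneg_left hb hz
        _ = c * (1/δ2 - 1/δ1) * (z^2 * Real.exp (-(z/δ1)^2)) := by field_simp
    · have := hsq_tendsto.const_mul (c * (1/δ2 - 1/δ1))
      simpa using this
  have hg_tendsto : Filter.Tendsto g Filter.atTop (nhds 0) := by
    have h2 := (hexp_tendsto δ2 hδ2).const_mul (δ2 / Real.sqrt Real.pi)
    have h1 := (hexp_tendsto δ1 hδ1).const_mul (δ1 / Real.sqrt Real.pi)
    rw [mul_zero] at h1 h2
    have := (hmul_tendsto.add h2).sub h1
    simpa using this
  have hcont : ContinuousWithinAt g (Set.Ici 0) 0 :=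
    (hderiv 0).continuousAt.continuousWithinAt
  have hint := integral_Ioi_of_hasDerivAt_of_nonneg hcont (fun x _ => hderiv x) hpos hg_tendsto
  have hg0 : g 0 = (δ2 - δ1) / Real.sqrt Real.pi := by
    simp [hgdef]
    ring
  -- now compute
  have hcongr : ∫ z in Set.Ioi (0:ℝ), f z = ∫ z in Set.Ioi (0:ℝ), erf (z/δ2) - erf (z/δ1) := by
    apply setIntegral_congr_fun measurableSet_Ioi
    intro z hz
    simp only [hfdef]
    rw [abs_sub_comm, abs_of_nonneg (hpos z hz)]
  calc ∫ z : ℝ, |erf (z/δ1) - erf (z/δ2)|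
      = ∫ z : ℝ, f |z| := by simp_rw [habs]
    _ = 2 * ∫ z in Set.Ioi (0:ℝ), f z := integral_comp_abs
    _ = 2 * (0 - g 0) := by rw [hcongr, hint]
    _ = (2 / Real.sqrt Real.pi) * (δ1 - δ2) := by
        rw [hg0]; field_simp; ring
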